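/- arXiv:2101.00107 — 4 statements merged into one kernel-verified Lean document; each statement's English description precedes it below -/
import Mathlib

section
/- Let q be a prime power, C ≥ 1, and α > 0 sufficiently small. For each i let F_i ⊆ [n] with |F_i| < αn, and let X_1, …, X_{⌊(1−6α)n⌋} be independent random vectors in F_q^n, where X_i is a near uniform vector of type F_i with constant C. Then with probability at least 1 − n(C/q)^{5αn}, the vectors X_1, …, X_{⌊(1−6α)n⌋} are linearly independent, i.e. the n × ⌊(1−6α)n⌋ matrix with these columns has full column rank. -/
open MeasureTheory ProbabilityTheory
open Finset
open scoped ENNReal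

lemma exists_determining_finset (F : Type) [Field F] (n : ℕ) (d : ℕ) :
    ∀ V : Submodule F (Fin n → F), Module.finrank F V ≤ d →
    ∃ A : Finset (Fin n), A.card ≤ d ∧ ∀ v ∈ V, (∀ i ∈ A, v i = 0) → v = 0 := by
  induction d with
  | zero =>
    intro V hV
    refine ⟨∅, le_rfl, fun v hv _ => ?_⟩
    have : V = ⊥ := Submodule.finrank_eq_zero.1 (Nat.le_zero.1 hV)
    simpa [this] using hv
  | succ d ih =>
    intro V hV
    by_cases hbot : ∀ v ∈ V, v = 0
    · exact ⟨∅, by simp, fun v hv _ => hbot v hv⟩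
    · push_neg at hbot
      obtain ⟨z, hzV, hz0⟩ := hbot
      obtain ⟨i, hi⟩ : ∃ i, z i ≠ 0 := by
        by_contra h; push_neg at h; exact hz0 (funext h)
      set W := V ⊓ LinearMap.ker (LinearMap.proj i : (Fin n → F) →ₗ[F] F) with hW
      have hWV : W < V := by
        refine lt_of_le_of_ne inf_le_left (fun h => hi ?_)
        have : z ∈ W := h ▸ hzV
        simpa [hW, LinearMap.mem_ker] using this.2
      have hd : Module.finrank F W ≤ d := by
        have := Submodule.finrank_lt_finrank_of_lt hWV
        omega
      obtain ⟨A, hA, hdet⟩ := ih W hd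
      refine ⟨insert i A, (card_insert_le _ _).trans (by omega), ?_⟩
      intro v hv h0
      have hvW : v ∈ W := by
        refine ⟨hv, ?_⟩
        simpa [LinearMap.mem_ker] using h0 i (mem_insert_self _ _)
      exact hdet v hvW (fun i' hi' => h0 i' (mem_insert_of_mem hi'))

set_option maxHeartbeats 1600000 in
lemma sum_over_submodule_le (F : Type) [Field F] [Fintype F] [DecidableEq F] (n : ℕ)
    (w : Fin n → F → ℝ≥0∞) (hw : ∀ i, ∑ a, w i a ≤ 1)
    (c : ℝ≥0∞) (V : Submodule F (Fin n → F)) [DecidablePred (· ∈ V)]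
    (A G : Finset (Fin n)) (hAG : Disjoint A G)
    (hdet : ∀ v ∈ V, (∀ i ∈ A, v i = 0) → v = 0)
    (hG : ∀ i ∈ G, ∀ a, w i a ≤ c) :
    ∑ z ∈ Finset.univ.filter (fun z : Fin n → F => z ∈ V), ∏ i, w i (z i)
      ≤ c ^ G.card := by
  classical
  set t : Fin n → Finset F := fun i => if i ∈ G then {0} else Finset.univ with ht
  set ρ : (Fin n → F) → (Fin n → F) := fun z i => if i ∈ G then 0 else z i with hρ
  set w' : Fin n → F → ℝ≥0∞ := fun i a => if i ∈ G then 1 else w i a with hw'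
  have key : ∀ z : Fin n → F, ∏ i, w i (z i) ≤ c ^ G.card * ∏ i, w' i (ρ z i) := by
    intro z
    have h1 : ∏ i, w i (z i) = (∏ i ∈ G, w i (z i)) * ∏ i ∈ Gᶜ, w i (z i) := by
      rw [prod_mul_prod_compl]
    have h2 : ∏ i ∈ G, w i (z i) ≤ ∏ i ∈ G, c := prod_le_prod' (fun i hi => hG i hi _)
    have h3 : ∏ i, w' i (ρ z i) = ∏ i ∈ Gᶜ, w i (z i) := by
      rw [← prod_mul_prod_compl G (fun i => w' i (ρ z i))]
      have : ∏ i ∈ G, w' i (ρ z i) = 1 := prod_eq_one (fun i hi => by simp [hw', hi])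
      rw [this, one_mul]
      exact prod_congr rfl (fun i hi => by have h : i ∉ G := mem_compl.1 hi; simp [hw', hρ, h])
    rw [h1, h3]
    exact mul_le_mul_left (h2.trans_eq (by rw [prod_const])) _
  calc ∑ z ∈ Finset.univ.filter (fun z : Fin n → F => z ∈ V), ∏ i, w i (z i)
      ≤ ∑ z ∈ Finset.univ.filter (fun z : Fin n → F => z ∈ V),
          c ^ G.card * ∏ i, w' i (ρ z i) := sum_le_sum (fun z _ => key z)
    _ = c ^ G.card * ∑ z ∈ Finset.univ.filter (fun z : Fin n → F => z ∈ V),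
          ∏ i, w' i (ρ z i) := by rw [mul_sum]
    _ ≤ c ^ G.card * 1 := by
        refine mul_le_mul_right ?_ _
        have hinj : Set.InjOn ρ (Finset.univ.filter (fun z : Fin n → F => z ∈ V)) := by
          intro z hz z' hz' hzz
          simp only [coe_filter, Set.mem_setOf_eq] at hz hz'
          have hsub : z - z' ∈ V := sub_mem hz.2 hz'.2
          have : z - z' = 0 := by
            refine hdet _ hsub (fun i hiA => ?_)
            have hiG : i ∉ G := fun hiG => (Finset.disjoint_left.1 hAG) hiA hiG
            have := congrFun hzz i
            simp only [hρ, if_neg hiG] at this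
            simp [this]
          exact sub_eq_zero.1 this
        calc ∑ z ∈ Finset.univ.filter (fun z : Fin n → F => z ∈ V), ∏ i, w' i (ρ z i)
            = ∑ u ∈ (Finset.univ.filter (fun z : Fin n → F => z ∈ V)).image ρ,
                ∏ i, w' i (u i) := (sum_image (g := ρ) (f := fun u : Fin n → F => ∏ i, w' i (u i))
                  (fun x hx y hy h => hinj hx hy h)).symm
          _ ≤ ∑ u ∈ Fintype.piFinset t, ∏ i, w' i (u i) := by
              refine sum_le_sum_of_subset ?_
              intro u hu
              obtain ⟨z, _, rfl⟩ := mem_image.1 hu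
              refine Fintype.mem_piFinset.2 (fun i => ?_)
              by_cases hi : i ∈ G <;> simp [ht, hρ, hi]
          _ = ∏ i, ∑ a ∈ t i, w' i a := (prod_univ_sum t w').symm
          _ ≤ 1 := by
              refine prod_le_one' (fun i _ => ?_)
              by_cases hi : i ∈ G
              · simp [ht, hw', hi]
              · simpa [ht, hw', hi] using hw i
    _ = c ^ G.card := mul_one _

set_option maxHeartbeats 1600000 in
lemma sum_dep_le (F : Type) [Field F] [Fintype F] (n m K : ℕ)
    [∀ x : Fin m → Fin n → F, Decidable (LinearIndependent F x)]
    (w : Fin n → Fin m → F → ℝ≥0∞)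
    (hw1 : ∀ i j, ∑ a, w i j a ≤ 1)
    (c : ℝ≥0∞) (hc : c ≤ 1)
    (Fset : Fin m → Finset (Fin n))
    (hK : ∀ j : Fin m, K + (m - 1) + (Fset j).card ≤ n)
    (hwc : ∀ (j : Fin m) (i : Fin n), i ∉ Fset j → ∀ a, w i j a ≤ c) :
    ∑ x ∈ Finset.univ.filter
        (fun x : Fin m → Fin n → F => ¬ LinearIndependent F x),
      ∏ j, ∏ i, w i j (x j i) ≤ (m : ℝ≥0∞) * c ^ K := by
  classical
  set γ := Fin n → F
  set Wcol : Fin m → γ → ℝ≥0∞ := fun j z => ∏ i, w i j (z i) with hWcol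
  have hWsum : ∀ j, ∑ z : γ, Wcol j z ≤ 1 := by
    intro j
    have : ∑ z ∈ Fintype.piFinset (fun _ : Fin n => (Finset.univ : Finset F)),
        ∏ i, w i j (z i) = ∏ i, ∑ a, w i j a := (prod_univ_sum _ _).symm
    rw [hWcol]
    calc ∑ z : γ, ∏ i, w i j (z i)
        = ∏ i, ∑ a, w i j a := by rw [← this, Fintype.piFinset_univ]
      _ ≤ 1 := prod_le_one' (fun i _ => hw1 i j)
  -- the per-column event
  set E : Fin m → Finset (Fin m → γ) := fun j => Finset.univ.filter
      (fun x : Fin m → γ => x j ∈ Submodule.span F (x '' ({j}ᶜ : Set (Fin m)))) with hE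
  -- column bound
  have colbound : ∀ j : Fin m, ∑ x ∈ E j, ∏ j', Wcol j' (x j') ≤ c ^ K := by
    intro j
    -- reindex by splitting coordinate j
    have e := Equiv.funSplitAt j γ
    have key : ∀ y : {j' : Fin m // j' ≠ j} → γ,
        ∑ z ∈ Finset.univ.filter
            (fun z : γ => z ∈ Submodule.span F (Set.range fun j' : {j' // j' ≠ j} => y j')),
          Wcol j z ≤ c ^ K := by
      intro y
      set V : Submodule F γ := Submodule.span F (Set.range fun j' : {j' // j' ≠ j} => y j')
      have hrank : Module.finrank F V ≤ m - 1 := by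
        have h1 : Module.finrank F V ≤ (Set.range fun j' : {j' // j' ≠ j} => y j').toFinset.card :=
          finrank_span_le_card _
        have h2 : (Set.range fun j' : {j' // j' ≠ j} => y j').toFinset.card
            ≤ Fintype.card {j' : Fin m // j' ≠ j} := by
          rw [Set.toFinset_range]
          exact (card_image_le).trans (by simp)
        have h3 : Fintype.card {j' : Fin m // j' ≠ j} = m - 1 := by
          rw [Fintype.card_subtype_compl, Fintype.card_subtype_eq, Fintype.card_fin]
        omega
      obtain ⟨A, hAcard, hAdet⟩ := exists_determining_finset F n (m-1) V hrank
      set G : Finset (Fin n) := (Finset.univ \ A) \ Fset j with hG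
      have hGcard : K ≤ G.card := by
        have h1 : (Finset.univ \ A).card - (Fset j).card ≤ G.card := le_card_sdiff _ _
        have h2 : (Finset.univ : Finset (Fin n)).card - A.card ≤ (Finset.univ \ A).card :=
          le_card_sdiff _ _
        have h3 := hK j
        have h4 : (Finset.univ : Finset (Fin n)).card = n := by simp
        omega
      have hdisj : Disjoint A G := by
        rw [hG]
        exact disjoint_of_subset_right sdiff_subset disjoint_sdiff
      have := sum_over_submodule_le F n (fun i a => w i j a) (fun i => hw1 i j) c V A G
        hdisj hAdet (fun i hi a => hwc j i (by rw [hG] at hi; exact (mem_sdiff.1 hi).2) a)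
      calc ∑ z ∈ Finset.univ.filter (fun z : γ => z ∈ V), Wcol j z ≤ c ^ G.card := this
        _ ≤ c ^ K := pow_le_pow_of_le_one zero_le hc hGcard
    -- now reindex the sum over E j
    set sub := {j' : Fin m // j' ≠ j}
    set e := Equiv.funSplitAt j γ with he
    have hsymm1 : ∀ (z : γ) (y : sub → γ), e.symm (z, y) j = z := by
      intro z y; simp [he, Equiv.funSplitAt, Equiv.piSplitAt]
    have hsymm2 : ∀ (z : γ) (y : sub → γ) (j') (h : j' ≠ j), e.symm (z, y) j' = y ⟨j', h⟩ := by
      intro z y j' h; simp [he, Equiv.funSplitAt, Equiv.piSplitAt, h]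
    have himg : ∀ (z : γ) (y : sub → γ),
        (e.symm (z, y)) '' ({j}ᶜ : Set (Fin m)) = Set.range (fun j' : sub => y j') := by
      intro z y
      ext v
      constructor
      · rintro ⟨j', hj', rfl⟩
        exact ⟨⟨j', hj'⟩, (hsymm2 z y j' hj').symm⟩
      · rintro ⟨⟨j', hj'⟩, rfl⟩
        exact ⟨j', hj', hsymm2 z y j' hj'⟩
    have hprodsplit : ∀ x : Fin m → γ,
        ∏ j', Wcol j' (x j') = Wcol j (x j) * ∏ j' : sub, Wcol j'.1 (x j'.1) := by
      intro x
      rw [Fintype.prod_eq_mul_prod_compl j]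
      congr 1
      exact Finset.prod_subtype ({j}ᶜ : Finset (Fin m)) (fun a => by simp)
        (fun a => Wcol a (x a))
    set R : (sub → γ) → ℝ≥0∞ := fun y => ∏ j' : sub, Wcol j'.1 (y j') with hR
    have hRsum : ∑ y : sub → γ, R y ≤ 1 := by
      have : ∑ y ∈ Fintype.piFinset (fun _ : sub => (Finset.univ : Finset γ)),
          ∏ j' : sub, Wcol j'.1 (y j') = ∏ j' : sub, ∑ z : γ, Wcol j'.1 z :=
        (prod_univ_sum _ _).symm
      rw [hR]
      calc ∑ y : sub → γ, ∏ j' : sub, Wcol j'.1 (y j')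
          = ∏ j' : sub, ∑ z : γ, Wcol j'.1 z := by rw [← this, Fintype.piFinset_univ]
        _ ≤ 1 := prod_le_one' (fun j' _ => hWsum j'.1)
    calc ∑ x ∈ E j, ∏ j', Wcol j' (x j')
        = ∑ x : Fin m → γ, if x j ∈ Submodule.span F (x '' ({j}ᶜ : Set (Fin m)))
            then ∏ j', Wcol j' (x j') else 0 := by rw [hE, sum_filter]
      _ = ∑ p : γ × (sub → γ), if (e.symm p) j ∈
              Submodule.span F ((e.symm p) '' ({j}ᶜ : Set (Fin m)))
            then ∏ j', Wcol j' (e.symm p j') else 0 := by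
          exact (Equiv.sum_comp e.symm _).symm
      _ = ∑ z : γ, ∑ y : sub → γ, if z ∈
              Submodule.span F (Set.range fun j' : sub => y j')
            then Wcol j z * R y else 0 := by
          rw [Fintype.sum_prod_type]
          refine Finset.sum_congr rfl (fun z _ => Finset.sum_congr rfl (fun y _ => ?_))
          rw [hsymm1, himg, hprodsplit, hsymm1, hR]
          congr 2
          exact Finset.prod_congr rfl (fun j' _ => by rw [hsymm2 z y j'.1 j'.2])
      _ = ∑ y : sub → γ, ∑ z : γ, if z ∈
              Submodule.span F (Set.range fun j' : sub => y j')
            then Wcol j z * R y else 0 := Finset.sum_comm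
      _ ≤ ∑ y : sub → γ, R y * c ^ K := by
          refine sum_le_sum (fun y _ => ?_)
          have : ∑ z : γ, (if z ∈ Submodule.span F (Set.range fun j' : sub => y j')
                then Wcol j z * R y else 0)
              = R y * ∑ z ∈ Finset.univ.filter
                  (fun z : γ => z ∈ Submodule.span F (Set.range fun j' : sub => y j')),
                  Wcol j z := by
            rw [mul_sum, ← sum_filter]
            exact Finset.sum_congr rfl (fun z _ => mul_comm _ _)
          rw [this]
          exact mul_le_mul_right (key y) _
      _ ≤ 1 * c ^ K := by
          rw [← Finset.sum_mul]
          exact mul_le_mul_left hRsum _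
      _ = c ^ K := one_mul _
  -- union bound
  have hmem : ∀ x ∈ Finset.univ.filter
      (fun x : Fin m → Fin n → F => ¬ LinearIndependent F x), ∃ j, x ∈ E j := by
    intro x hx
    rw [mem_filter] at hx
    have := hx.2
    rw [linearIndependent_iff_notMem_span] at this
    push_neg at this
    obtain ⟨j, hj⟩ := this
    refine ⟨j, ?_⟩
    rw [hE, mem_filter]
    refine ⟨mem_univ _, ?_⟩
    rwa [Set.compl_eq_univ_diff]
  calc ∑ x ∈ Finset.univ.filter (fun x : Fin m → Fin n → F => ¬ LinearIndependent F x),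
        ∏ j, ∏ i, w i j (x j i)
      = ∑ x ∈ Finset.univ.filter (fun x : Fin m → Fin n → F => ¬ LinearIndependent F x),
        ∏ j, Wcol j (x j) := rfl
    _ ≤ ∑ x ∈ Finset.univ.filter (fun x : Fin m → Fin n → F => ¬ LinearIndependent F x),
        ∑ j, (if x ∈ E j then ∏ j', Wcol j' (x j') else 0) := by
        refine sum_le_sum (fun x hx => ?_)
        obtain ⟨j, hj⟩ := hmem x hx
        have := Finset.single_le_sum
          (f := fun j => if x ∈ E j then ∏ j', Wcol j' (x j') else 0)
          (fun j _ => zero_le) (mem_univ j)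
        simpa [hj] using this
    _ = ∑ j : Fin m, ∑ x ∈ Finset.univ.filter
          (fun x : Fin m → Fin n → F => ¬ LinearIndependent F x),
          (if x ∈ E j then ∏ j', Wcol j' (x j') else 0) := Finset.sum_comm
    _ ≤ ∑ _j : Fin m, c ^ K := by
        refine sum_le_sum (fun j _ => ?_)
        rw [← sum_filter]
        refine le_trans (sum_le_sum_of_subset ?_) (colbound j)
        exact fun x hx => (mem_filter.1 hx).2
    _ = (m : ℝ≥0∞) * c ^ K := by
        rw [Finset.sum_const, card_univ, Fintype.card_fin, nsmul_eq_mul]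

lemma bridge (F : Type) [Fintype F] [MeasurableSpace F] [MeasurableSingletonClass F]
    (Ω : Type) [MeasureSpace Ω] (n m : ℕ)
    (X : Fin m → Ω → (Fin n → F))
    (hmeas : ∀ (j : Fin m) (i : Fin n), Measurable fun ω => X j ω i)
    (hindep : iIndepFun
      (fun p : Fin n × Fin m => fun ω => X p.2 ω p.1) ℙ)
    (s : Set (Fin m → Fin n → F)) [DecidablePred (· ∈ s)] :
    MeasurableSet {ω | (fun j i => X j ω i) ∈ s} ∧
    ℙ {ω | (fun j i => X j ω i) ∈ s} =
      ∑ x ∈ Finset.univ.filter (· ∈ s), ∏ j, ∏ i, ℙ {ω | X j ω i = x j i} := by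
  classical
  set Y : Ω → (Fin m → Fin n → F) := fun ω j i => X j ω i with hYdef
  have hY : ∀ x : Fin m → Fin n → F, {ω | Y ω = x} =
      ⋂ p : Fin n × Fin m, (fun ω => X p.2 ω p.1) ⁻¹' {x p.2 p.1} := by
    intro x
    ext ω
    simp only [Set.mem_setOf_eq, Set.mem_iInter, Set.mem_preimage, Set.mem_singleton_iff,
      Prod.forall, funext_iff, hYdef]
    exact ⟨fun h i j => h j i, fun h j i => h i j⟩
  have hmeasx : ∀ x : Fin m → Fin n → F, MeasurableSet {ω | Y ω = x} := by
    intro x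
    rw [hY]
    exact MeasurableSet.iInter (fun p => (hmeas p.2 p.1) (measurableSet_singleton _))
  have hprob : ∀ x : Fin m → Fin n → F,
      ℙ {ω | Y ω = x} = ∏ j, ∏ i, ℙ {ω | X j ω i = x j i} := by
    intro x
    have h := hindep.measure_inter_preimage_eq_mul Finset.univ
      (sets := fun p => ({x p.2 p.1} : Set F))
      (fun p _ => measurableSet_singleton _)
    have h2 : (⋂ p ∈ (Finset.univ : Finset (Fin n × Fin m)),
        (fun ω => X p.2 ω p.1) ⁻¹' ({x p.2 p.1} : Set F)) =
        ⋂ p : Fin n × Fin m, (fun ω => X p.2 ω p.1) ⁻¹' {x p.2 p.1} := by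
      simp
    rw [h2] at h
    rw [hY, h, Fintype.prod_prod_type]
    rw [Finset.prod_comm]
    rfl
  have hdecomp : {ω | Y ω ∈ s} = ⋃ x ∈ Finset.univ.filter (· ∈ s), {ω | Y ω = x} := by
    ext ω
    simp only [Set.mem_setOf_eq, Set.mem_iUnion, Finset.mem_filter, Finset.mem_univ, true_and]
    exact ⟨fun h => ⟨Y ω, h, rfl⟩, by rintro ⟨x, hx, h⟩; rw [h]; exact hx⟩
  have hdisj : (↑(Finset.univ.filter (· ∈ s)) : Set (Fin m → Fin n → F)).PairwiseDisjoint
      (fun x => {ω | Y ω = x}) := by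
    intro x _ y _ hxy
    refine Set.disjoint_left.2 (fun ω hx hy => ?_)
    exact hxy (hx.symm.trans hy)
  constructor
  · rw [show {ω | (fun j i => X j ω i) ∈ s} = {ω | Y ω ∈ s} from rfl, hdecomp]
    exact MeasurableSet.biUnion (Set.to_countable _) (fun x _ => hmeasx x)
  · rw [show {ω | (fun j i => X j ω i) ∈ s} = {ω | Y ω ∈ s} from rfl, hdecomp,
      measure_biUnion_finset hdisj (fun x _ => hmeasx x)]
    exact Finset.sum_congr rfl (fun x _ => hprob x)

/-- **Full rank for thin matrices.** If `X_1, …, X_{⌊(1−6α)n⌋}` are independent near uniform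
vectors in `F_q^n` of types `F_1, …` with `|F_i| < αn`, then with probability at least
`1 − n(C/q)^{5αn}` they are linearly independent. -/
theorem near_uniform_thin_full_rank
    (C : ℝ) (hC : 1 ≤ C) :
    ∃ α₀ > (0 : ℝ), ∀ α : ℝ, 0 < α → α ≤ α₀ →
      ∀ (n m : ℕ), m = ⌊(1 - 6 * α) * n⌋₊ →
      ∀ (F : Type) [Field F] [Fintype F] [MeasurableSpace F] [MeasurableSingletonClass F]
        (Ω : Type) [MeasureSpace Ω], IsProbabilityMeasure (ℙ : Measure Ω) →
      ∀ Fset : Fin m → Finset (Fin n),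
        -- |F_i| < αn
        (∀ i, ((Fset i).card : ℝ) < α * n) →
      ∀ X : Fin m → Ω → (Fin n → F),
        (∀ (j : Fin m) (i : Fin n), Measurable fun ω => X j ω i) →
        -- all entries of all the vectors are (jointly) independent
        iIndepFun
          (fun p : Fin n × Fin m => fun ω => X p.2 ω p.1) ℙ →
        -- X_j is a near uniform vector of type F_j
        (∀ (j : Fin m) (i : Fin n), i ∉ Fset j → ∀ a : F,
          (ℙ {ω | X j ω i = a}).toReal ≤ C / (Fintype.card F : ℝ)) →
        1 - n * (C / (Fintype.card F : ℝ)) ^ (5 * α * n) ≤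
          (ℙ {ω | LinearIndependent F fun j : Fin m => X j ω}).toReal := by
  classical
  refine ⟨1/6, by norm_num, ?_⟩
  intro α hα hα6 n m hm F _ _ _ _ Ω _ hprobΩ Fset hFcard X hmeas hindep hnear
  have hq0 : (0 : ℝ) < (Fintype.card F : ℝ) := by
    have : 0 < Fintype.card F := Fintype.card_pos
    exact_mod_cast this
  set q : ℝ := (Fintype.card F : ℝ) with hqdef
  set r : ℝ := C / q with hrdef
  have hr0 : 0 < r := div_pos (lt_of_lt_of_le one_pos hC) hq0
  -- the LI event
  set LIset : Set Ω := {ω | LinearIndependent F fun j : Fin m => X j ω} with hLIdef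
  -- case n = 0
  by_cases hn : n = 0
  · subst hn
    have hm0 : m = 0 := by simp [hm]
    have hempty : IsEmpty (Fin m) := by rw [hm0]; infer_instance
    have huniv : LIset = Set.univ := by
      ext ω
      simp only [hLIdef, Set.mem_setOf_eq, Set.mem_univ, iff_true]
      exact linearIndependent_empty_type
    rw [huniv]
    simp [measure_univ]
  -- trivial case : 1 ≤ r
  by_cases hr1 : 1 ≤ r
  · have h1 : (1 : ℝ) ≤ r ^ (5 * α * n) := by
      have := Real.rpow_le_rpow_of_exponent_le hr1
        (show (0:ℝ) ≤ 5 * α * n by positivity)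
      rwa [Real.rpow_zero] at this
    have hn1 : (1 : ℝ) ≤ n := by
      have : 1 ≤ n := Nat.one_le_iff_ne_zero.2 hn
      exact_mod_cast this
    have : (1 : ℝ) ≤ n * r ^ (5 * α * n) := le_trans (by linarith) (by nlinarith)
    have h0 : (1:ℝ) - n * r ^ (5 * α * n) ≤ 0 := by linarith
    exact h0.trans ENNReal.toReal_nonneg
  -- main case
  push_neg at hr1
  set K : ℕ := ⌈5 * α * (n:ℝ)⌉₊ with hKdef
  have hKge : 5 * α * (n:ℝ) ≤ K := Nat.le_ceil _
  have hmn : (m : ℝ) ≤ (1 - 6*α) * n := by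
    rw [hm]
    exact Nat.floor_le (by nlinarith [Nat.cast_nonneg (α := ℝ) n])
  have hmlen : m ≤ n := by
    rw [hm]
    calc ⌊(1 - 6 * α) * (n:ℝ)⌋₊ ≤ ⌊(n:ℝ)⌋₊ :=
          Nat.floor_le_floor (by nlinarith [Nat.cast_nonneg (α := ℝ) n])
      _ = n := Nat.floor_natCast n
  have hK : ∀ j : Fin m, K + (m - 1) + (Fset j).card ≤ n := by
    intro j
    have hm1 : 1 ≤ m := lt_of_le_of_lt (Nat.zero_le _) j.2
    have hKlt : (K : ℝ) < 5 * α * n + 1 := by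
      have := Nat.ceil_lt_add_one (show (0:ℝ) ≤ 5 * α * n by positivity)
      exact_mod_cast this
    have hFj := hFcard j
    have key : ((K + (m - 1) + (Fset j).card : ℕ) : ℝ) < (n : ℝ) := by
      push_cast [Nat.cast_sub hm1]
      linarith
    exact_mod_cast key.le
  set c : ℝ≥0∞ := ENNReal.ofReal r with hcdef
  have hc1 : c ≤ 1 := ENNReal.ofReal_le_one.2 hr1.le
  set w : Fin n → Fin m → F → ℝ≥0∞ := fun i j a => ℙ {ω | X j ω i = a} with hwdef
  have hw1 : ∀ i j, ∑ a, w i j a ≤ 1 := by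
    intro i j
    have hdisj : (↑(Finset.univ : Finset F) : Set F).PairwiseDisjoint
        (fun a => {ω | X j ω i = a}) := by
      intro a _ b _ hab
      exact Set.disjoint_left.2 (fun ω ha hb => hab (ha.symm.trans hb))
    have hmeasa : ∀ a : F, MeasurableSet {ω | X j ω i = a} :=
      fun a => (hmeas j i) (measurableSet_singleton a)
    calc ∑ a : F, w i j a
        = ℙ (⋃ a ∈ (Finset.univ : Finset F), {ω | X j ω i = a}) :=
          (measure_biUnion_finset hdisj (fun a _ => hmeasa a)).symm
      _ ≤ 1 := prob_le_one
  have hwc : ∀ (j : Fin m) (i : Fin n), i ∉ Fset j → ∀ a, w i j a ≤ c := by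
    intro j i hi a
    have h2 : w i j a = ℙ {ω | X j ω i = a} := rfl
    rw [h2, hcdef, ← ENNReal.ofReal_toReal (measure_ne_top ℙ _)]
    exact ENNReal.ofReal_le_ofReal (hnear j i hi a)
  -- apply bridge with the set of dependent matrices
  obtain ⟨hmeasevt, hval⟩ := bridge F Ω n m X hmeas hindep
    {x : Fin m → Fin n → F | ¬ LinearIndependent F x}
  have hbound := sum_dep_le F n m K w hw1 c hc1 Fset hK hwc
  have hfilter_eq : Finset.univ.filter
        (· ∈ {x : Fin m → Fin n → F | ¬ LinearIndependent F x})
      = Finset.univ.filter (fun x : Fin m → Fin n → F => ¬ LinearIndependent F x) := by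
    apply Finset.filter_congr
    intro x _
    simp [Set.mem_setOf_eq]
  have hcompl_eq : {ω | (fun j i => X j ω i) ∈
      {x : Fin m → Fin n → F | ¬ LinearIndependent F x}} = LIsetᶜ := rfl
  have hPcompl : ℙ LIsetᶜ ≤ (m : ℝ≥0∞) * c ^ K := by
    rw [← hcompl_eq, hval, hfilter_eq]
    exact hbound
  have hmeasLI : MeasurableSet LIset := by
    have := hmeasevt
    rw [hcompl_eq] at this
    simpa using this.compl
  -- convert to reals
  have hsum : ℙ LIset + ℙ LIsetᶜ = 1 := prob_add_prob_compl hmeasLI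
  have htop1 : ℙ LIset ≠ ⊤ := measure_ne_top _ _
  have htop2 : ℙ LIsetᶜ ≠ ⊤ := measure_ne_top _ _
  have hreal : (ℙ LIset).toReal + (ℙ LIsetᶜ).toReal = 1 := by
    rw [← ENNReal.toReal_add htop1 htop2, hsum, ENNReal.toReal_one]
  have hPcomplReal : (ℙ LIsetᶜ).toReal ≤ (m : ℝ) * r ^ (K : ℕ) := by
    have h := ENNReal.toReal_mono (by
        exact ENNReal.mul_ne_top (by simp) (ENNReal.pow_ne_top ENNReal.ofReal_ne_top))
      hPcompl
    rwa [ENNReal.toReal_mul, ENNReal.toReal_pow, ENNReal.toReal_natCast,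
      ENNReal.toReal_ofReal hr0.le] at h
  have hrpow : (r : ℝ) ^ (K : ℕ) ≤ r ^ (5 * α * (n:ℝ)) := by
    rw [← Real.rpow_natCast r K]
    exact Real.rpow_le_rpow_of_exponent_ge hr0 hr1.le hKge
  have hfinal : (ℙ LIsetᶜ).toReal ≤ (n : ℝ) * r ^ (5 * α * (n:ℝ)) := by
    refine hPcomplReal.trans ?_
    have h1 : (m : ℝ) ≤ (n : ℝ) := by exact_mod_cast hmlen
    have h2 : (0:ℝ) ≤ r ^ (K:ℕ) := by positivity
    nlinarith [Real.rpow_nonneg hr0.le (5 * α * (n:ℝ))]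
  linarith
end

section
/- Let q be a prime power, C ≥ 1, and α > 0 sufficiently small. Suppose the index sets F_1, …, F_n ⊆ [n] satisfy |F_i| < αn and every index i ∈ [n] is contained in at most (1 − 12α)n of the sets F_j. Let X_1, …, X_k be independent random vectors in F_q^n where X_i is a near uniform vector of type F_i with constant C, and (1 − 6α)n ≤ k ≤ n. Let W_k be the span of X_1, …, X_k. Then there exist constants C' > 0 and c > 0 such that with probability at least 1 − (C'/q)^{cn}, every nonzero vector a ∈ F_q^n orthogonal to W_k (i.e. with a · X_i = 0 for all i ≤ k) has at least αn nonzero coordinates. -/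
open MeasureTheory ProbabilityTheory Matrix

open Finset

lemma aux_colsum {n : ℕ} {F : Type} [Field F] [Fintype F] [DecidableEq F]
    (r : Fin n → F → ℝ) (hr : ∀ i v, 0 ≤ r i v) (hsum : ∀ i, ∑ v, r i v = 1)
    {B : ℝ} (hB : 0 ≤ B) {i₀ : Fin n} (hri₀ : ∀ v, r i₀ v ≤ B)
    {a : Fin n → F} (ha : a i₀ ≠ 0) :
    ∑ col ∈ univ.filter (fun col : Fin n → F => a ⬝ᵥ col = 0), ∏ i, r i (col i) ≤ B := by
  classical
  set s : Finset (Fin n → F) := univ.filter (fun col : Fin n → F => a ⬝ᵥ col = 0) with hs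
  -- key injectivity: elements of s are determined by their values off i₀
  have hinj : ∀ col ∈ s, ∀ col' ∈ s, (∀ i, i ≠ i₀ → col i = col' i) → col = col' := by
    intro col hcol col' hcol' hagree
    have h1 : a ⬝ᵥ col = 0 := (mem_filter.mp hcol).2
    have h2 : a ⬝ᵥ col' = 0 := (mem_filter.mp hcol').2
    have e1 : a i₀ * col i₀ + ∑ i ∈ univ.erase i₀, a i * col i = 0 := by
      have h1' : ∑ i, a i * col i = 0 := h1
      rw [← Finset.add_sum_erase univ (fun i => a i * col i) (mem_univ i₀)] at h1'
      exact h1'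
    have e2 : a i₀ * col' i₀ + ∑ i ∈ univ.erase i₀, a i * col' i = 0 := by
      have h2' : ∑ i, a i * col' i = 0 := h2
      rw [← Finset.add_sum_erase univ (fun i => a i * col' i) (mem_univ i₀)] at h2'
      exact h2' 
    have hsame : ∑ i ∈ univ.erase i₀, a i * col i = ∑ i ∈ univ.erase i₀, a i * col' i := by
      apply Finset.sum_congr rfl
      intro i hi
      rw [hagree i (Finset.ne_of_mem_erase hi)]
    have : a i₀ * col i₀ = a i₀ * col' i₀ := by
      have := e1.trans e2.symm
      rw [hsame] at this
      linear_combination this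
    have hval : col i₀ = col' i₀ := mul_left_cancel₀ ha this
    funext i
    by_cases h : i = i₀
    · rw [h]; exact hval
    · exact hagree i h
  -- bound each term by B * (product over erase)
  have hterm : ∀ col ∈ s, ∏ i, r i (col i) ≤ B * ∏ i ∈ univ.erase i₀, r i (col i) := by
    intro col _
    rw [← Finset.mul_prod_erase univ _ (mem_univ i₀)]
    exact mul_le_mul_of_nonneg_right (hri₀ _) (Finset.prod_nonneg fun i _ => hr _ _)
  have step1 : ∑ col ∈ s, ∏ i, r i (col i) ≤ B * ∑ col ∈ s, ∏ i ∈ univ.erase i₀, r i (col i) := by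
    rw [Finset.mul_sum]
    exact Finset.sum_le_sum hterm
  -- the sum over erase-products is at most 1
  have step2 : ∑ col ∈ s, ∏ i ∈ univ.erase i₀, r i (col i) ≤ 1 := by
    have hone : ∏ i ∈ univ.erase i₀, ∑ v, r i v = 1 := by
      rw [Finset.prod_congr rfl fun i _ => hsum i]; simp
    rw [Finset.prod_sum] at hone
    rw [← hone]
    -- inject s into the pi set
    set Φ : (Fin n → F) → (∀ i ∈ univ.erase i₀, F) := fun col => fun i _ => col i with hΦ
    have hmem : ∀ col ∈ s, Φ col ∈ (univ.erase i₀).pi (fun _ => (univ : Finset F)) := by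
      intro col _; simp [Φ, Finset.mem_pi]
    have hΦinj : Set.InjOn Φ s := by
      intro col hcol col' hcol' heq
      apply hinj col hcol col' hcol'
      intro i hi
      have hi' : i ∈ univ.erase i₀ := Finset.mem_erase.mpr ⟨hi, mem_univ i⟩
      exact congrFun (congrFun heq i) hi'
    calc ∑ col ∈ s, ∏ i ∈ univ.erase i₀, r i (col i)
        = ∑ col ∈ s, ∏ x ∈ (univ.erase i₀).attach, r x.1 (Φ col x.1 x.2) := by
          apply Finset.sum_congr rfl
          intro col _
          rw [← Finset.prod_attach (univ.erase i₀) (fun i => r i (col i))]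
      _ = ∑ p ∈ s.image Φ, ∏ x ∈ (univ.erase i₀).attach, r x.1 (p x.1 x.2) := by
          rw [Finset.sum_image (fun x hx y hy h => hΦinj hx hy h)]
      _ ≤ ∑ p ∈ (univ.erase i₀).pi (fun _ => (univ : Finset F)),
            ∏ x ∈ (univ.erase i₀).attach, r x.1 (p x.1 x.2) := by
          apply Finset.sum_le_sum_of_subset_of_nonneg
          · intro p hp
            obtain ⟨col, hcol, rfl⟩ := Finset.mem_image.mp hp
            exact hmem col hcol
          · intro p _ _
            exact Finset.prod_nonneg fun x _ => hr _ _
  calc ∑ col ∈ s, ∏ i, r i (col i) ≤ B * ∑ col ∈ s, ∏ i ∈ univ.erase i₀, r i (col i) := step1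
    _ ≤ B * 1 := mul_le_mul_of_nonneg_left step2 hB
    _ = B := mul_one B

lemma aux_proba {n k : ℕ} {F : Type} [Field F] [Fintype F] [DecidableEq F]
    [MeasurableSpace F] [MeasurableSingletonClass F]
    {Ω : Type} [MeasureSpace Ω] [IsProbabilityMeasure (ℙ : Measure Ω)]
    (X : Fin k → Ω → (Fin n → F))
    (hmeas : ∀ (j : Fin k) (i : Fin n), Measurable fun ω => X j ω i)
    (hindep : iIndepFun
      (fun p : Fin n × Fin k => fun ω => X p.2 ω p.1) ℙ)
    {B : ℝ} (hB : 0 ≤ B) {a : Fin n → F} {i₀ : Fin n} (ha : a i₀ ≠ 0)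
    (J : Finset (Fin k))
    (hJ : ∀ j ∈ J, ∀ v : F, (ℙ {ω | X j ω i₀ = v}).toReal ≤ B) :
    (ℙ {ω | ∀ j : Fin k, a ⬝ᵥ X j ω = 0}).toReal ≤ B ^ J.card := by
  classical
  set r : Fin n → Fin k → F → ℝ :=
    fun i j v => (ℙ ((fun ω => X j ω i) ⁻¹' {v})).toReal with hr_def
  have hr : ∀ i j v, 0 ≤ r i j v := fun i j v => ENNReal.toReal_nonneg
  have hrsum : ∀ i j, ∑ v, r i j v = 1 := by
    intro i j
    have h := sum_measure_preimage_singleton (μ := (ℙ : Measure Ω)) (univ : Finset F)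
      (f := fun ω => X j ω i) (fun v _ => (hmeas j i) (measurableSet_singleton v))
    have h2 : ∑ v : F, ℙ ((fun ω => X j ω i) ⁻¹' {v}) = 1 := by
      rw [h]; simp
    calc ∑ v, r i j v = (∑ v : F, ℙ ((fun ω => X j ω i) ⁻¹' {v})).toReal := by
          rw [ENNReal.toReal_sum (fun v _ => measure_ne_top _ _)]
      _ = 1 := by rw [h2]; simp
  -- the set of admissible column patterns
  set t : Fin k → Finset (Fin n → F) :=
    fun j => if j ∈ J then univ.filter (fun col : Fin n → F => a ⬝ᵥ col = 0) else univ with ht_def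
  set Good : Finset (Fin k → Fin n → F) := Fintype.piFinset t with hGood
  set pattern : (Fin k → Fin n → F) → Set Ω :=
    fun N => ⋂ p ∈ (univ : Finset (Fin n × Fin k)), (fun ω => X p.2 ω p.1) ⁻¹' {N p.2 p.1}
    with hpat
  have hsub : {ω | ∀ j : Fin k, a ⬝ᵥ X j ω = 0} ⊆ ⋃ N ∈ Good, pattern N := by
    intro ω hω
    have hNG : (fun j i => X j ω i) ∈ Good := by
      rw [hGood, Fintype.mem_piFinset]
      intro j
      rw [ht_def]
      by_cases hj : j ∈ J
      · simp only [hj, if_true, mem_filter, mem_univ, true_and]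
        exact hω j
      · simp [hj]
    refine Set.mem_biUnion hNG ?_
    rw [hpat]
    simp only [Set.mem_iInter, Set.mem_preimage, Set.mem_singleton_iff]
    intro p _
    trivial
  have hpatmeas : ∀ N, ℙ (pattern N)
      = ∏ p : Fin n × Fin k, ℙ ((fun ω => X p.2 ω p.1) ⁻¹' {N p.2 p.1}) := by
    intro N
    exact hindep.measure_inter_preimage_eq_mul (univ : Finset (Fin n × Fin k))
      (sets := fun p => {N p.2 p.1}) (fun p _ => measurableSet_singleton _)
  have hunion : ℙ {ω | ∀ j : Fin k, a ⬝ᵥ X j ω = 0} ≤ ∑ N ∈ Good, ℙ (pattern N) :=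
    le_trans (measure_mono hsub) (measure_biUnion_finset_le Good pattern)
  have hne : ∀ N ∈ Good, ℙ (pattern N) ≠ ⊤ := fun N _ => measure_ne_top _ _
  have hsumne : (∑ N ∈ Good, ℙ (pattern N)) ≠ ⊤ := by
    rw [ENNReal.sum_ne_top]; exact hne
  have hreal : (ℙ {ω | ∀ j : Fin k, a ⬝ᵥ X j ω = 0}).toReal
      ≤ ∑ N ∈ Good, ∏ p : Fin n × Fin k, r p.1 p.2 (N p.2 p.1) := by
    have h1 := ENNReal.toReal_mono hsumne hunion
    rw [ENNReal.toReal_sum hne] at h1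
    refine le_trans h1 (le_of_eq (Finset.sum_congr rfl fun N _ => ?_))
    rw [hpatmeas N, ENNReal.toReal_prod]
  -- rearrange the product and factor
  have hfactor : ∑ N ∈ Good, ∏ p : Fin n × Fin k, r p.1 p.2 (N p.2 p.1)
      = ∏ j : Fin k, ∑ col ∈ t j, ∏ i : Fin n, r i j (col i) := by
    rw [Finset.prod_univ_sum t (fun j col => ∏ i : Fin n, r i j (col i))]
    apply Finset.sum_congr rfl
    intro N _
    rw [Fintype.prod_prod_type (fun p : Fin n × Fin k => r p.1 p.2 (N p.2 p.1))]
    exact Finset.prod_comm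
  rw [hfactor] at hreal
  refine hreal.trans ?_
  have hfacnn : ∀ j : Fin k, 0 ≤ ∑ col ∈ t j, ∏ i : Fin n, r i j (col i) :=
    fun j => Finset.sum_nonneg fun col _ => Finset.prod_nonneg fun i _ => hr _ _ _
  have hbnd : ∀ j : Fin k, (∑ col ∈ t j, ∏ i : Fin n, r i j (col i))
      ≤ (if j ∈ J then B else 1) := by
    intro j
    by_cases hj : j ∈ J
    · simp only [hj, if_true, ht_def]
      exact aux_colsum (fun i v => r i j v) (fun i v => hr i j v) (fun i => hrsum i j)
        hB (fun v => hJ j hj v) ha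
    · simp only [hj, if_false, ht_def]
      have : ∑ col ∈ (univ : Finset (Fin n → F)), ∏ i : Fin n, r i j (col i) = 1 := by
        rw [← Fintype.piFinset_univ,
          ← Finset.prod_univ_sum (fun _ : Fin n => (univ : Finset F)) (fun i v => r i j v)]
        rw [Finset.prod_congr rfl fun i _ => hrsum i j]
        simp
      exact le_of_eq this
  calc ∏ j : Fin k, ∑ col ∈ t j, ∏ i : Fin n, r i j (col i)
      ≤ ∏ j : Fin k, (if j ∈ J then B else 1) :=
        Finset.prod_le_prod (fun j _ => hfacnn j) (fun j _ => hbnd j)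
    _ = B ^ J.card := by
        rw [Finset.prod_ite_mem univ J (fun _ => B), Finset.univ_inter, Finset.prod_const]

lemma aux_count {n : ℕ} {F : Type} [Fintype F] [DecidableEq F] [Zero F] [Nonempty F]
    (A : Finset (Fin n → F)) {β : ℝ}
    (hA : ∀ a ∈ A, ((univ.filter fun i => a i ≠ 0).card : ℝ) ≤ β) (hβ : 0 ≤ β) :
    (A.card : ℝ) ≤ 2 ^ n * (Fintype.card F : ℝ) ^ β := by
  classical
  have hq1 : (1 : ℝ) ≤ (Fintype.card F : ℝ) := by
    have := Fintype.card_pos (α := F)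
    exact_mod_cast this
  have hcard : A.card = ∑ S ∈ (univ : Finset (Finset (Fin n))),
      (A.filter (fun a => univ.filter (fun i => a i ≠ 0) = S)).card :=
    Finset.card_eq_sum_card_fiberwise (fun a _ => mem_univ _)
  have hfiber : ∀ S : Finset (Fin n),
      ((A.filter (fun a => univ.filter (fun i => a i ≠ 0) = S)).card : ℝ)
        ≤ (Fintype.card F : ℝ) ^ β := by
    intro S
    set fib := A.filter (fun a => univ.filter (fun i => a i ≠ 0) = S) with hfib
    rcases Finset.eq_empty_or_nonempty fib with he | ⟨a₀, ha₀⟩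
    · rw [he]
      simp
      positivity
    · have hScard : (S.card : ℝ) ≤ β := by
        have h1 := (Finset.mem_filter.mp ha₀).2
        have h2 := hA a₀ (Finset.mem_filter.mp ha₀).1
        rw [h1] at h2
        exact h2
      have hinj : fib.card ≤ Fintype.card F ^ S.card := by
        have : fib.card ≤ (univ : Finset ({i // i ∈ S} → F)).card := by
          apply Finset.card_le_card_of_injOn (fun a (i : {i // i ∈ S}) => a i.1)
            (fun a _ => mem_univ _)
          intro x hx y hy hxy
          have hxS := (Finset.mem_filter.mp hx).2
          have hyS := (Finset.mem_filter.mp hy).2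
          funext i
          by_cases hiS : i ∈ S
          · exact congrFun hxy ⟨i, hiS⟩
          · have hx0 : x i = 0 := by
              by_contra h
              exact hiS (hxS ▸ Finset.mem_filter.mpr ⟨mem_univ _, h⟩)
            have hy0 : y i = 0 := by
              by_contra h
              exact hiS (hyS ▸ Finset.mem_filter.mpr ⟨mem_univ _, h⟩)
            rw [hx0, hy0]
        simpa [Fintype.card_fun, Fintype.card_coe] using this
      calc (fib.card : ℝ) ≤ ((Fintype.card F ^ S.card : ℕ) : ℝ) := by exact_mod_cast hinj
        _ = (Fintype.card F : ℝ) ^ (S.card : ℝ) := by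
            push_cast
            rw [Real.rpow_natCast]
        _ ≤ (Fintype.card F : ℝ) ^ β :=
            Real.rpow_le_rpow_of_exponent_le hq1 hScard
  calc (A.card : ℝ) = ∑ S ∈ (univ : Finset (Finset (Fin n))),
        ((A.filter (fun a => univ.filter (fun i => a i ≠ 0) = S)).card : ℝ) := by
        rw [hcard]; push_cast; ring
    _ ≤ ∑ _S ∈ (univ : Finset (Finset (Fin n))), (Fintype.card F : ℝ) ^ β :=
        Finset.sum_le_sum (fun S _ => hfiber S)
    _ = 2 ^ n * (Fintype.card F : ℝ) ^ β := by
        rw [Finset.sum_const, Finset.card_univ, Fintype.card_finset, Fintype.card_fin]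
        push_cast
        ring


lemma aux_calc {α C q : ℝ} {n : ℕ} (hα : 0 < α) (hC : 1 ≤ C)
    (hq : 2 ^ (1/α) * C ^ 6 < q) :
    2 ^ n * q ^ (α * n) * (C / q) ^ (6 * α * n) ≤ (2 ^ (1/α) * C ^ 6 / q) ^ (α * n) := by
  have h2 : (0:ℝ) < 2 ^ (1/α) := Real.rpow_pos_of_pos (by norm_num) _
  have h2a : (1:ℝ) ≤ 2 ^ (1/α) :=
    Real.one_le_rpow (by norm_num) (by positivity)
  have hC0 : (0:ℝ) < C := by linarith
  have hC6 : (1:ℝ) ≤ C ^ 6 := one_le_pow₀ hC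
  have hq1 : (1:ℝ) ≤ q := by nlinarith
  have hq0 : (0:ℝ) < q := by linarith
  set e : ℝ := α * n with he
  have hαn : (0:ℝ) ≤ e := by positivity
  have e1 : (2:ℝ) ^ n = (2 ^ (1/α)) ^ e := by
    rw [← Real.rpow_natCast 2 n, ← Real.rpow_mul (by norm_num : (0:ℝ) ≤ 2)]
    congr 1
    rw [he]
    field_simp
  have e2 : (C / q) ^ (6 * α * (n:ℝ)) = ((C ^ 6 / q ^ 6 : ℝ)) ^ e := by
    rw [show 6 * α * (n:ℝ) = (6:ℝ) * e by rw [he]; ring,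
      Real.rpow_mul (by positivity : (0:ℝ) ≤ C / q) 6 e]
    congr 1
    rw [show ((6:ℝ)) = ((6:ℕ):ℝ) by norm_num, Real.rpow_natCast]
    rw [div_pow]
  rw [e1, e2, mul_assoc, ← Real.mul_rpow hq0.le (by positivity),
    ← Real.mul_rpow h2.le (by positivity)]
  apply Real.rpow_le_rpow (by positivity) _ hαn
  have hbase : q * (C ^ 6 / q ^ 6) ≤ C ^ 6 / q := by
    have heq : q * (C ^ 6 / q ^ 6) = C ^ 6 / q ^ 5 := by
      field_simp
    rw [heq, div_le_div_iff₀ (by positivity) hq0]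
    have h5 : q ≤ q ^ 5 := le_self_pow₀ hq1 (by norm_num)
    nlinarith [(by positivity : (0:ℝ) < C^6)]
  calc 2 ^ (1/α) * (q * (C ^ 6 / q ^ 6)) ≤ 2 ^ (1/α) * (C ^ 6 / q) :=
        mul_le_mul_of_nonneg_left hbase h2.le
    _ = 2 ^ (1/α) * C ^ 6 / q := by ring

/-- **Non-sparsity of normal vectors.** With high probability, every nonzero vector orthogonal to
the span of the near uniform columns `X_1, …, X_k` (with `(1−6α)n ≤ k ≤ n`) has at least `αn`
nonzero coordinates. -/
theorem near_uniform_no_sparse_normal_vector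
    (C : ℝ) (hC : 1 ≤ C) :
    ∃ α₀ > (0 : ℝ), ∀ α : ℝ, 0 < α → α ≤ α₀ →
    ∃ C' > (0 : ℝ), ∃ c > (0 : ℝ),
      ∀ (n k : ℕ) (hkn : k ≤ n), (1 - 6 * α) * n ≤ (k : ℝ) →
      ∀ (F : Type) [Field F] [Fintype F] [DecidableEq F] [MeasurableSpace F] [MeasurableSingletonClass F]
        (Ω : Type) [MeasureSpace Ω], IsProbabilityMeasure (ℙ : Measure Ω) →
      ∀ Fset : Fin n → Finset (Fin n),
        -- |F_i| < αn
        (∀ i, ((Fset i).card : ℝ) < α * n) →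
        -- every index i lies in at most (1 − 12α)n of the sets F_j
        (∀ i : Fin n,
          (((Finset.univ.filter fun j => i ∈ Fset j).card : ℝ) ≤ (1 - 12 * α) * n)) →
      ∀ X : Fin k → Ω → (Fin n → F),
        (∀ (j : Fin k) (i : Fin n), Measurable fun ω => X j ω i) →
        -- all entries of all the vectors are (jointly) independent
        iIndepFun
          (fun p : Fin n × Fin k => fun ω => X p.2 ω p.1) ℙ →
        -- X_j is a near uniform vector of type F_j
        (∀ (j : Fin k) (i : Fin n), i ∉ Fset (Fin.castLE hkn j) → ∀ a : F,
          (ℙ {ω | X j ω i = a}).toReal ≤ C / (Fintype.card F : ℝ)) →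
        1 - (C' / (Fintype.card F : ℝ)) ^ (c * n) ≤
          (ℙ {ω | ∀ a : Fin n → F, a ≠ 0 → (∀ j : Fin k, a ⬝ᵥ X j ω = 0) →
            α * n ≤ ((Finset.univ.filter fun i : Fin n => a i ≠ 0).card : ℝ)}).toReal := by
  classical
  refine ⟨1, one_pos, ?_⟩
  intro α hα hα1
  have hC'pos : (0:ℝ) < 2 ^ (1/α) * C ^ 6 := by positivity
  refine ⟨2 ^ (1/α) * C ^ 6, hC'pos, α, hα, ?_⟩
  intro n k hkn hk F _ _ _ _ _ Ω _ hprob Fset hFcard hFcount X hmeas hindep hnear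
  haveI := hprob
  set C' : ℝ := 2 ^ (1/α) * C ^ 6 with hC'def
  set q : ℝ := (Fintype.card F : ℝ) with hqdef
  have hq1 : (1:ℝ) ≤ q := by
    have := Fintype.card_pos (α := F)
    rw [hqdef]; exact_mod_cast this
  have hq0 : (0:ℝ) < q := by linarith
  have hexp : (0:ℝ) ≤ α * n := by positivity
  by_cases hcase : q ≤ C'
  · -- trivial case: (C'/q)^(αn) ≥ 1
    have h1 : (1:ℝ) ≤ C' / q := by
      rw [le_div_iff₀ hq0]; linarith
    have h2 : (1:ℝ) ≤ (C'/q) ^ (α * (n:ℝ)) := Real.one_le_rpow h1 hexp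
    have := ENNReal.toReal_nonneg (a := ℙ {ω | ∀ a : Fin n → F, a ≠ 0 →
      (∀ j : Fin k, a ⬝ᵥ X j ω = 0) →
      α * n ≤ ((Finset.univ.filter fun i : Fin n => a i ≠ 0).card : ℝ)})
    linarith
  push_neg at hcase
  have hCq : C < q := by
    have h1 : (1:ℝ) ≤ 2 ^ (1/α) := Real.one_le_rpow (by norm_num) (by positivity)
    have h2 : C ≤ C ^ 6 := le_self_pow₀ hC (by norm_num)
    nlinarith
  -- set up the bad event
  set E : (Fin n → F) → Set Ω := fun a => {ω | ∀ j : Fin k, a ⬝ᵥ X j ω = 0} with hE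
  set A : Finset (Fin n → F) := univ.filter
    (fun a => a ≠ 0 ∧ ((univ.filter fun i => a i ≠ 0).card : ℝ) < α * n) with hA
  have hEmeas : ∀ a, MeasurableSet (E a) := by
    intro a
    have hdot : ∀ j : Fin k, Measurable (fun ω => a ⬝ᵥ X j ω) := by
      intro j
      exact (measurable_of_countable (fun v : Fin n → F => a ⬝ᵥ v)).comp
        (measurable_pi_lambda _ (hmeas j))
    have : E a = ⋂ j : Fin k, (fun ω => a ⬝ᵥ X j ω) ⁻¹' {0} := by
      ext ω; simp [hE, Set.mem_iInter]
    rw [this]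
    exact MeasurableSet.iInter fun j => (hdot j) (measurableSet_singleton 0)
  have hUmeas : MeasurableSet (⋃ a ∈ A, E a) :=
    MeasurableSet.biUnion A.countable_toSet (fun a _ => hEmeas a)
  -- the good event is the complement of the union
  have hGeq : {ω | ∀ a : Fin n → F, a ≠ 0 → (∀ j : Fin k, a ⬝ᵥ X j ω = 0) →
      α * n ≤ ((Finset.univ.filter fun i : Fin n => a i ≠ 0).card : ℝ)}
      = (⋃ a ∈ A, E a)ᶜ := by
    ext ω
    simp only [Set.mem_setOf_eq, Set.mem_compl_iff, Set.mem_iUnion, not_exists]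
    constructor
    · intro h a
      intro haA hEa
      have h1 := (Finset.mem_filter.mp haA).2
      have := h a h1.1 hEa
      linarith [h1.2]
    · intro h a hane horth
      by_contra hlt
      push_neg at hlt
      exact h a (Finset.mem_filter.mpr ⟨mem_univ _, hane, hlt⟩) horth
  rw [hGeq, prob_compl_eq_one_sub hUmeas,
    ENNReal.toReal_sub_of_le prob_le_one ENNReal.one_ne_top, ENNReal.toReal_one]
  have hkey : (ℙ (⋃ a ∈ A, E a)).toReal ≤ (C'/q) ^ (α * (n:ℝ)) := by
    -- union bound
    have h1 : ℙ (⋃ a ∈ A, E a) ≤ ∑ a ∈ A, ℙ (E a) := measure_biUnion_finset_le A E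
    have hne : ∀ a ∈ A, ℙ (E a) ≠ ⊤ := fun a _ => measure_ne_top _ _
    have h2 : (ℙ (⋃ a ∈ A, E a)).toReal ≤ ∑ a ∈ A, (ℙ (E a)).toReal := by
      have := ENNReal.toReal_mono (by rw [ENNReal.sum_ne_top]; exact hne) h1
      rwa [ENNReal.toReal_sum hne] at this
    -- per-vector bound
    have hterm : ∀ a ∈ A, (ℙ (E a)).toReal ≤ (C/q) ^ (6 * α * (n:ℝ)) := by
      intro a haA
      obtain ⟨hane, hacard⟩ := (Finset.mem_filter.mp haA).2
      obtain ⟨i₀, hi₀⟩ := Function.ne_iff.mp hane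
      have hi₀' : a i₀ ≠ 0 := hi₀
      set J : Finset (Fin k) := univ.filter (fun j => i₀ ∉ Fset (Fin.castLE hkn j)) with hJ
      have hJbound : (ℙ (E a)).toReal ≤ (C/q) ^ J.card := by
        refine aux_proba X hmeas hindep (by positivity) hi₀' J ?_
        intro j hj v
        exact hnear j i₀ (Finset.mem_filter.mp hj).2 v
      have hJcard : 6 * α * (n:ℝ) ≤ (J.card : ℝ) := by
        set m := (univ.filter fun j : Fin k => i₀ ∈ Fset (Fin.castLE hkn j)).card with hm
        have hsplit : J.card + m = k := by
          have h := Finset.card_filter_add_card_filter_not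
            (s := (univ : Finset (Fin k))) (p := fun j => i₀ ∉ Fset (Fin.castLE hkn j))
          simp only [not_not] at h
          simpa using h
        have hmle : (m:ℝ) ≤ (1 - 12*α) * n := by
          have h1 : m ≤ (univ.filter fun j : Fin n => i₀ ∈ Fset j).card := by
            apply Finset.card_le_card_of_injOn (Fin.castLE hkn)
            · intro j hj
              exact Finset.mem_filter.mpr ⟨mem_univ _, (Finset.mem_filter.mp hj).2⟩
            · intro x _ y _ hxy
              exact Fin.castLE_injective hkn hxy
          calc (m:ℝ) ≤ ((univ.filter fun j : Fin n => i₀ ∈ Fset j).card : ℝ) := by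
                exact_mod_cast h1
            _ ≤ (1 - 12*α) * n := hFcount i₀
        have hsplit' : (J.card : ℝ) + (m:ℝ) = (k:ℝ) := by exact_mod_cast hsplit
        linarith
      have hCq1 : C/q ≤ 1 := by
        rw [div_le_one hq0]; linarith
      have hCq0 : 0 < C/q := by positivity
      calc (ℙ (E a)).toReal ≤ (C/q) ^ J.card := hJbound
        _ = (C/q) ^ ((J.card : ℕ) : ℝ) := (Real.rpow_natCast _ _).symm
        _ ≤ (C/q) ^ (6 * α * (n:ℝ)) :=
            Real.rpow_le_rpow_of_exponent_ge hCq0 hCq1 hJcard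
    -- counting bound
    have hAcard : (A.card : ℝ) ≤ 2 ^ n * q ^ (α * (n:ℝ)) := by
      refine aux_count A (fun a haA => ?_) hexp
      exact le_of_lt (Finset.mem_filter.mp haA).2.2
    have hT : (0:ℝ) ≤ (C/q) ^ (6 * α * (n:ℝ)) := Real.rpow_nonneg (by positivity) _
    calc (ℙ (⋃ a ∈ A, E a)).toReal ≤ ∑ a ∈ A, (ℙ (E a)).toReal := h2
      _ ≤ ∑ _a ∈ A, (C/q) ^ (6 * α * (n:ℝ)) := Finset.sum_le_sum hterm
      _ = (A.card : ℝ) * (C/q) ^ (6 * α * (n:ℝ)) := by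
          rw [Finset.sum_const, nsmul_eq_mul]
      _ ≤ (2 ^ n * q ^ (α * (n:ℝ))) * (C/q) ^ (6 * α * (n:ℝ)) :=
          mul_le_mul_of_nonneg_right hAcard hT
      _ ≤ (C'/q) ^ (α * (n:ℝ)) := by
          rw [hC'def]
          exact aux_calc hα hC hcase
  linarith
end

section
/- (Counting lemma) Let q be a power of a prime p, F ⊆ [n], and for each i ∉ F let (c_k^i)_{k ∈ F_q} be nonnegative reals summing to 1, and define f_i(t) = |∑_{k ∈ F_q} c_k^i e_p(tr(k t))|, where e_p(x) = exp(2πi x/p) and tr : F_q → F_p is the field trace. Let T ⊆ F_q and K, M be such that for every i ∉ F and a ∉ T one has |f_i(t a)| < K q^{-1/2}. Let B be the set of vectors a = (a_1, …, a_n) ∈ F_q^n with (1/q) ∑_{t ≠ 0} ∏_{i ∉ F} f_i(t a_i) ≥ (K q^{-1/2})^M. Then |B| ≤ q · 2^n · |T|^{n − M − |F|} · q^{M + |F|}. -/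
open MeasureTheory Finset

/-- `e_p(x) = exp(2πi x/p)` for `x ∈ F_p = ZMod p`. -/
noncomputable def ep (p : ℕ) (x : ZMod p) : ℂ :=
  Complex.exp (2 * Real.pi * Complex.I * ((x.val : ℂ) / p))

lemma norm_ep (p : ℕ) (x : ZMod p) : ‖ep p x‖ = 1 := by
  have h : (2 * Real.pi * Complex.I * ((x.val : ℂ) / p))
      = ((2 * Real.pi * x.val / p : ℝ) : ℂ) * Complex.I := by
    push_cast; ring
  rw [ep, h, Complex.norm_exp_ofReal_mul_I]

/-- **Counting lemma.** The set of "structured" vectors `a` (those with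
`(1/q) ∑_{t ≠ 0} ∏_{i ∉ F} f_i(t a_i) ≥ (K q^{-1/2})^M`) has size at most
`q · 2^n · |T|^{n − M − |F|} · q^{M + |F|}`. -/
theorem counting_structured_vectors
    (p : ℕ) (hp : p.Prime) (F : Type) [Field F] [Fintype F] [DecidableEq F] [CharP F p]
    [Algebra (ZMod p) F]
    (n : ℕ) (Fs : Finset (Fin n))
    -- the coefficients (c_k^i), nonnegative and summing to 1, for i ∉ Fs
    (c : Fin n → F → ℝ)
    (hc0 : ∀ i ∉ Fs, ∀ k : F, 0 ≤ c i k)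
    (hc1 : ∀ i ∉ Fs, ∑ k : F, c i k = 1)
    (T : Finset F) (K : ℝ) (M : ℕ)
    -- f_i(t) = |∑_k c_k^i e_p(tr(k t))| is < K q^{-1/2} whenever t ∉ T
    (hT : ∀ i ∉ Fs, ∀ t : F, t ∉ T →
      ‖∑ k : F, (c i k : ℂ) * ep p (Algebra.trace (ZMod p) F (k * t))‖ <
        K * (Fintype.card F : ℝ) ^ (-(1 : ℝ) / 2)) :
    Nat.card {a : Fin n → F //
        (K * (Fintype.card F : ℝ) ^ (-(1 : ℝ) / 2)) ^ M ≤
          (Fintype.card F : ℝ)⁻¹ *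
            ∑ t ∈ Finset.univ.erase (0 : F), ∏ i ∈ Finset.univ \ Fs,
              ‖∑ k : F, (c i k : ℂ) * ep p (Algebra.trace (ZMod p) F (k * (t * a i)))‖} ≤
      Fintype.card F * 2 ^ n * T.card ^ (n - M - Fs.card) *
        Fintype.card F ^ (M + Fs.card) := by
  classical
  have hq2 : 2 ≤ Fintype.card F := Fintype.one_lt_card
  set q := Fintype.card F with hqdef
  set s := Fs.card with hsdef
  set θ : ℝ := K * (q : ℝ) ^ (-(1 : ℝ) / 2) with hθdef
  have hq0 : (0 : ℝ) < (q : ℝ) := by exact_mod_cast Nat.lt_of_lt_of_le Nat.zero_lt_two hq2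
  have hsn : s ≤ n := by
    rw [hsdef]
    simpa using Finset.card_le_univ Fs
  -- the structured set as a Finset
  set Bset : Finset (Fin n → F) := Finset.univ.filter (fun a : Fin n → F =>
      θ ^ M ≤ (q : ℝ)⁻¹ *
        ∑ t ∈ Finset.univ.erase (0 : F), ∏ i ∈ Finset.univ \ Fs,
          ‖∑ k : F, (c i k : ℂ) * ep p (Algebra.trace (ZMod p) F (k * (t * a i)))‖)
    with hBdef
  have hNat : Nat.card {a : Fin n → F //
      θ ^ M ≤ (q : ℝ)⁻¹ *
        ∑ t ∈ Finset.univ.erase (0 : F), ∏ i ∈ Finset.univ \ Fs,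
          ‖∑ k : F, (c i k : ℂ) * ep p (Algebra.trace (ZMod p) F (k * (t * a i)))‖} =
      Bset.card := by
    rw [Nat.card_eq_fintype_card, Fintype.card_subtype]
  rw [hNat]
  clear hNat
  -- basic bounds on f
  have hf0 : ∀ (i : Fin n) (x : F),
      (0 : ℝ) ≤ ‖∑ k : F, (c i k : ℂ) * ep p (Algebra.trace (ZMod p) F (k * x))‖ :=
    fun _ _ => norm_nonneg _
  have hf1 : ∀ i ∉ Fs, ∀ x : F,
      ‖∑ k : F, (c i k : ℂ) * ep p (Algebra.trace (ZMod p) F (k * x))‖ ≤ 1 := by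
    intro i hi x
    calc ‖∑ k : F, (c i k : ℂ) * ep p (Algebra.trace (ZMod p) F (k * x))‖
        ≤ ∑ k : F, ‖(c i k : ℂ) * ep p (Algebra.trace (ZMod p) F (k * x))‖ := norm_sum_le _ _
      _ = ∑ k : F, c i k := by
          refine Finset.sum_congr rfl fun k _ => ?_
          rw [norm_mul, norm_ep, mul_one, Complex.norm_real, Real.norm_eq_abs,
            abs_of_nonneg (hc0 i hi k)]
      _ = 1 := hc1 i hi
  have htriv : Bset.card ≤ q ^ n := by
    refine (Finset.card_filter_le _ _).trans ?_
    rw [Finset.card_univ, Fintype.card_fun, Fintype.card_fin]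
  have hTq : T.card ≤ q := Finset.card_le_univ T
  have hq1 : 1 ≤ q := by omega
  have hpos2n : 0 < q * 2 ^ n := by positivity
  by_cases hns : n ≤ M + s
  · -- trivial case: exponent of T is 0
    have h0 : n - M - s = 0 := by omega
    refine htriv.trans ?_
    rw [h0, pow_zero, mul_one]
    calc q ^ n ≤ q ^ (M + s) := Nat.pow_le_pow_right hq1 hns
      _ ≤ q * 2 ^ n * q ^ (M + s) := Nat.le_mul_of_pos_left _ hpos2n
  push_neg at hns
  by_cases hTu : T = Finset.univ
  · -- trivial case: T is everything
    refine htriv.trans ?_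
    have hTcard : T.card = q := by rw [hTu, Finset.card_univ]
    rw [hTcard]
    calc q ^ n ≤ q ^ (n - M - s + (M + s)) := Nat.pow_le_pow_right hq1 (by omega)
      _ = q ^ (n - M - s) * q ^ (M + s) := pow_add q _ _
      _ ≤ q * 2 ^ n * q ^ (n - M - s) * q ^ (M + s) := by
          rw [mul_assoc]
          exact Nat.le_mul_of_pos_left _ hpos2n
  -- θ is positive
  obtain ⟨i₀, hi₀⟩ : ∃ i, i ∉ Fs := by
    by_contra h; push_neg at h
    have hFu : Fs = Finset.univ := Finset.eq_univ_iff_forall.mpr h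
    have hsn' : s = n := by rw [hsdef, hFu, Finset.card_univ, Fintype.card_fin]
    omega
  obtain ⟨t₀, ht₀⟩ : ∃ t, t ∉ T := by
    by_contra h; push_neg at h
    exact hTu (Finset.eq_univ_iff_forall.mpr h)
  have hθpos : 0 < θ := lt_of_le_of_lt (hf0 i₀ t₀) (hT i₀ hi₀ t₀ ht₀)
  have hpowpos : (0 : ℝ) < θ ^ M := pow_pos hθpos M
  by_cases hθ1 : 1 ≤ θ
  · -- threshold ≥ 1 : the set is empty
    have hBempty : Bset = ∅ := by
      rw [hBdef, Finset.filter_eq_empty_iff]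
      intro a _
      rw [not_le]
      have hsum : ∑ t ∈ Finset.univ.erase (0 : F), ∏ i ∈ Finset.univ \ Fs,
          ‖∑ k : F, (c i k : ℂ) * ep p (Algebra.trace (ZMod p) F (k * (t * a i)))‖
          ≤ ((q - 1 : ℕ) : ℝ) := by
        calc ∑ t ∈ Finset.univ.erase (0 : F), ∏ i ∈ Finset.univ \ Fs,
              ‖∑ k : F, (c i k : ℂ) * ep p (Algebra.trace (ZMod p) F (k * (t * a i)))‖
            ≤ ∑ _t ∈ Finset.univ.erase (0 : F), (1 : ℝ) := by
              refine Finset.sum_le_sum fun t _ => ?_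
              exact Finset.prod_le_one (fun i _ => hf0 _ _)
                (fun i hi => hf1 i (Finset.mem_sdiff.mp hi).2 _)
          _ = ((q - 1 : ℕ) : ℝ) := by
              rw [Finset.sum_const, Finset.card_erase_of_mem (Finset.mem_univ _),
                Finset.card_univ, nsmul_eq_mul, mul_one]
      have hq1' : ((q - 1 : ℕ) : ℝ) < (q : ℝ) := by
        have : q - 1 < q := by omega
        exact_mod_cast this
      have h1 : (q : ℝ)⁻¹ * ∑ t ∈ Finset.univ.erase (0 : F), ∏ i ∈ Finset.univ \ Fs,
          ‖∑ k : F, (c i k : ℂ) * ep p (Algebra.trace (ZMod p) F (k * (t * a i)))‖ < 1 := by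
        rw [inv_mul_lt_iff₀ hq0, mul_one]
        exact lt_of_le_of_lt hsum hq1'
      exact lt_of_lt_of_le h1 (one_le_pow₀ hθ1)
    rw [hBempty, Finset.card_empty]
    exact Nat.zero_le _
  push_neg at hθ1
  -- main case: 0 < θ < 1
  set A : F → Finset (Fin n) → Finset (Fin n → F) := fun t S =>
    Fintype.piFinset fun i =>
      if i ∈ (Finset.univ \ Fs) \ S then T.image (fun x => t⁻¹ * x) else Finset.univ
    with hAdef
  set SS : Finset (Finset (Fin n)) :=
    (Finset.univ \ Fs).powerset.filter (fun S => S.card ≤ M) with hSSdef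
  have hcover : Bset ⊆ (Finset.univ.erase (0 : F)).biUnion fun t => SS.biUnion (A t) := by
    intro a ha
    rw [hBdef, Finset.mem_filter] at ha
    obtain ⟨-, hP⟩ := ha
    obtain ⟨t, htmem, htprod⟩ : ∃ t ∈ Finset.univ.erase (0 : F),
        θ ^ M ≤ ∏ i ∈ Finset.univ \ Fs,
          ‖∑ k : F, (c i k : ℂ) * ep p (Algebra.trace (ZMod p) F (k * (t * a i)))‖ := by
      by_contra hcon
      push_neg at hcon
      have hne : (Finset.univ.erase (0 : F)).Nonempty := by
        obtain ⟨x, hx⟩ := exists_ne (0 : F)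
        exact ⟨x, Finset.mem_erase.mpr ⟨hx, Finset.mem_univ x⟩⟩
      have hsum := Finset.sum_lt_sum_of_nonempty hne hcon
      rw [Finset.sum_const, Finset.card_erase_of_mem (Finset.mem_univ _), Finset.card_univ,
        nsmul_eq_mul] at hsum
      have hq1' : ((q - 1 : ℕ) : ℝ) < (q : ℝ) := by
        have : q - 1 < q := by omega
        exact_mod_cast this
      rw [le_inv_mul_iff₀ hq0] at hP
      nlinarith
    set S : Finset (Fin n) := (Finset.univ \ Fs).filter (fun i => t * a i ∉ T) with hSdef
    have hSsub : S ⊆ Finset.univ \ Fs := Finset.filter_subset _ _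
    have hScard : S.card ≤ M := by
      by_contra hMS
      push_neg at hMS
      have h1 : ∏ i ∈ Finset.univ \ Fs,
          ‖∑ k : F, (c i k : ℂ) * ep p (Algebra.trace (ZMod p) F (k * (t * a i)))‖
          ≤ ∏ i ∈ S,
          ‖∑ k : F, (c i k : ℂ) * ep p (Algebra.trace (ZMod p) F (k * (t * a i)))‖ := by
        rw [← Finset.prod_sdiff hSsub]
        have hle1 : ∏ i ∈ (Finset.univ \ Fs) \ S,
            ‖∑ k : F, (c i k : ℂ) * ep p (Algebra.trace (ZMod p) F (k * (t * a i)))‖ ≤ 1 :=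
          Finset.prod_le_one (fun i _ => hf0 _ _)
            (fun i hi => hf1 i (Finset.mem_sdiff.mp (Finset.mem_sdiff.mp hi).1).2 _)
        have hge0 : (0 : ℝ) ≤ ∏ i ∈ S,
            ‖∑ k : F, (c i k : ℂ) * ep p (Algebra.trace (ZMod p) F (k * (t * a i)))‖ :=
          Finset.prod_nonneg fun i _ => hf0 _ _
        nlinarith
      have h2 : ∏ i ∈ S,
          ‖∑ k : F, (c i k : ℂ) * ep p (Algebra.trace (ZMod p) F (k * (t * a i)))‖
          ≤ θ ^ S.card := by
        calc ∏ i ∈ S,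
            ‖∑ k : F, (c i k : ℂ) * ep p (Algebra.trace (ZMod p) F (k * (t * a i)))‖
            ≤ ∏ _i ∈ S, θ := by
              refine Finset.prod_le_prod (fun i _ => hf0 _ _) fun i hi => ?_
              rw [hSdef, Finset.mem_filter] at hi
              exact (hT i (Finset.mem_sdiff.mp hi.1).2 (t * a i) hi.2).le
          _ = θ ^ S.card := Finset.prod_const θ
      have h3 : θ ^ S.card ≤ θ ^ (M + 1) :=
        pow_le_pow_of_le_one hθpos.le hθ1.le (by omega)
      have h4 : θ ^ (M + 1) < θ ^ M := by
        rw [pow_succ]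
        nlinarith
      linarith
    rw [Finset.mem_biUnion]
    refine ⟨t, htmem, ?_⟩
    rw [Finset.mem_biUnion]
    refine ⟨S, ?_, ?_⟩
    · rw [hSSdef, Finset.mem_filter, Finset.mem_powerset]
      exact ⟨hSsub, hScard⟩
    · simp only [hAdef]
      rw [Fintype.mem_piFinset]
      intro i
      by_cases hiW : i ∈ (Finset.univ \ Fs) \ S
      · rw [if_pos hiW]
        have hi2 := Finset.mem_sdiff.mp hiW
        have hiT : t * a i ∈ T := by
          by_contra hnot
          exact hi2.2 (Finset.mem_filter.mpr ⟨hi2.1, hnot⟩)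
        refine Finset.mem_image.mpr ⟨t * a i, hiT, ?_⟩
        exact inv_mul_cancel_left₀ (Finset.mem_erase.mp htmem).1 (a i)
      · rw [if_neg hiW]
        exact Finset.mem_univ _
  have hAcard : ∀ t : F, t ≠ 0 → ∀ S ∈ SS,
      (A t S).card ≤ T.card ^ (n - M - s) * q ^ (M + s) := by
    intro t ht S hS
    rw [hSSdef, Finset.mem_filter, Finset.mem_powerset] at hS
    obtain ⟨hSsub, hSM⟩ := hS
    have hWcard : ((Finset.univ \ Fs) \ S).card = n - s - S.card := by
      rw [Finset.card_sdiff_of_subset hSsub, Finset.card_sdiff_of_subset (Finset.subset_univ Fs),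
        Finset.card_univ, Fintype.card_fin]
    have hScard_le : S.card ≤ n - s := by
      have := Finset.card_le_card hSsub
      rwa [Finset.card_sdiff_of_subset (Finset.subset_univ Fs), Finset.card_univ, Fintype.card_fin] at this
    have hw1 : n - M - s ≤ ((Finset.univ \ Fs) \ S).card := by omega
    have hw2 : ((Finset.univ \ Fs) \ S).card ≤ n := by omega
    have hcardA : (A t S).card =
        q ^ (n - ((Finset.univ \ Fs) \ S).card) * T.card ^ ((Finset.univ \ Fs) \ S).card := by
      simp only [hAdef]
      rw [Fintype.card_piFinset,
        ← Finset.prod_sdiff (Finset.subset_univ ((Finset.univ \ Fs) \ S))]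
      have e1 : ∀ i ∈ (Finset.univ : Finset (Fin n)) \ ((Finset.univ \ Fs) \ S),
          (if i ∈ (Finset.univ \ Fs) \ S then T.image (fun x => t⁻¹ * x)
            else (Finset.univ : Finset F)).card = q := by
        intro i hi
        rw [if_neg (Finset.mem_sdiff.mp hi).2, Finset.card_univ]
      have e2 : ∀ i ∈ (Finset.univ \ Fs) \ S,
          (if i ∈ (Finset.univ \ Fs) \ S then T.image (fun x => t⁻¹ * x)
            else (Finset.univ : Finset F)).card = T.card := by
        intro i hi
        rw [if_pos hi, Finset.card_image_of_injective _ (mul_right_injective₀ (inv_ne_zero ht))]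
      rw [Finset.prod_congr rfl e1, Finset.prod_congr rfl e2, Finset.prod_const,
        Finset.prod_const, Finset.card_sdiff_of_subset (Finset.subset_univ _), Finset.card_univ,
        Fintype.card_fin]
    calc (A t S).card
        = q ^ (n - ((Finset.univ \ Fs) \ S).card) * T.card ^ ((Finset.univ \ Fs) \ S).card :=
          hcardA
      _ = q ^ (n - ((Finset.univ \ Fs) \ S).card) *
            (T.card ^ (n - M - s) * T.card ^ (((Finset.univ \ Fs) \ S).card - (n - M - s))) := by
          have hx : ((Finset.univ \ Fs) \ S).card =
              (n - M - s) + (((Finset.univ \ Fs) \ S).card - (n - M - s)) := by omega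
          rw [← pow_add, ← hx]
      _ ≤ q ^ (n - ((Finset.univ \ Fs) \ S).card) *
            (T.card ^ (n - M - s) * q ^ (((Finset.univ \ Fs) \ S).card - (n - M - s))) := by
          exact Nat.mul_le_mul_left _ (Nat.mul_le_mul_left _ (Nat.pow_le_pow_left hTq _))
      _ = T.card ^ (n - M - s) *
            (q ^ (n - ((Finset.univ \ Fs) \ S).card) *
              q ^ (((Finset.univ \ Fs) \ S).card - (n - M - s))) := by ring
      _ = T.card ^ (n - M - s) * q ^ (M + s) := by
          have hy : (n - ((Finset.univ \ Fs) \ S).card) +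
              (((Finset.univ \ Fs) \ S).card - (n - M - s)) = M + s := by omega
          rw [← pow_add, hy]
  calc Bset.card
      ≤ ((Finset.univ.erase (0 : F)).biUnion fun t => SS.biUnion (A t)).card :=
        Finset.card_le_card hcover
    _ ≤ ∑ t ∈ Finset.univ.erase (0 : F), (SS.biUnion (A t)).card := Finset.card_biUnion_le
    _ ≤ ∑ t ∈ Finset.univ.erase (0 : F), ∑ S ∈ SS, (A t S).card :=
        Finset.sum_le_sum fun t _ => Finset.card_biUnion_le
    _ ≤ ∑ t ∈ Finset.univ.erase (0 : F), ∑ _S ∈ SS, (T.card ^ (n - M - s) * q ^ (M + s)) :=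
        Finset.sum_le_sum fun t ht => Finset.sum_le_sum fun S hS =>
          hAcard t (Finset.mem_erase.mp ht).1 S hS
    _ = (Finset.univ.erase (0 : F)).card * (SS.card * (T.card ^ (n - M - s) * q ^ (M + s))) := by
        rw [Finset.sum_const, Finset.sum_const, smul_eq_mul, smul_eq_mul]
    _ ≤ q * (2 ^ n * (T.card ^ (n - M - s) * q ^ (M + s))) := by
        have h1 : (Finset.univ.erase (0 : F)).card ≤ q := by
          rw [Finset.card_erase_of_mem (Finset.mem_univ _), Finset.card_univ]
          omega
        have h2 : SS.card ≤ 2 ^ n := by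
          calc SS.card ≤ (Finset.univ \ Fs).powerset.card := by
                rw [hSSdef]
                exact Finset.card_le_card (Finset.filter_subset _ _)
            _ = 2 ^ (Finset.univ \ Fs).card := Finset.card_powerset _
            _ ≤ 2 ^ n := by
                refine Nat.pow_le_pow_right (by omega) ?_
                rw [Finset.card_sdiff_of_subset (Finset.subset_univ Fs), Finset.card_univ, Fintype.card_fin]
                omega
        exact Nat.mul_le_mul h1 (Nat.mul_le_mul h2 (le_refl _))
    _ = q * 2 ^ n * T.card ^ (n - M - s) * q ^ (M + s) := by ring
end

section
/- Let q be a prime power and let H ⊆ F_q^n be a fixed subspace of codimension d. Let X be a random vector in F_q^n with independent entries, and suppose δ ≥ 0 is such that for every nonzero w ∈ H^⊥ one has |P(X · w = 0) − 1/q| < δ. Then |P(X ∈ H) − 1/q^d| ≤ 2δ. -/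
open MeasureTheory ProbabilityTheory Matrix

/-- **Unstructured normal vectors give near-uniform membership probability.** If every nonzero
`w ∈ H^⊥` satisfies `|P(X · w = 0) − 1/q| < δ`, then `|P(X ∈ H) − 1/q^d| ≤ 2δ`, where `d` is the
codimension of `H`. -/
theorem mem_subspace_of_unstructured_perp
    (n d : ℕ) (hd : d ≤ n) (F : Type) [Field F] [Fintype F]
    [MeasurableSpace F] [MeasurableSingletonClass F]
    (Ω : Type) [MeasureSpace Ω] (hprob : IsProbabilityMeasure (ℙ : Measure Ω))
    (H : Submodule F (Fin n → F))
    -- H has codimension d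
    (hH : Module.finrank F H = n - d)
    (X : Ω → (Fin n → F))
    (hmeas : ∀ i, Measurable fun ω => X ω i)
    -- the entries of X are independent
    (hindep : iIndepFun (fun i : Fin n => fun ω => X ω i) ℙ)
    (δ : ℝ) (hδ : 0 ≤ δ)
    -- every nonzero w in the orthogonal complement of H satisfies |P(X·w = 0) − 1/q| < δ
    (hperp : ∀ w : Fin n → F, w ≠ 0 → (∀ v ∈ H, w ⬝ᵥ v = 0) →
      |(ℙ {ω | X ω ⬝ᵥ w = 0}).toReal - (Fintype.card F : ℝ)⁻¹| < δ) :
    |(ℙ {ω | X ω ∈ H}).toReal - ((Fintype.card F : ℝ) ^ d)⁻¹| ≤ 2 * δ := by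
  classical
  have hfinrank_pi : Module.finrank F (Fin n → F) = n := by simp [Module.finrank_pi]
  rcases Nat.eq_zero_or_pos d with rfl | hd1
  · -- d = 0 : H = ⊤
    have hHtop : H = ⊤ := Submodule.eq_top_of_finrank_eq (by rw [hH, hfinrank_pi]; omega)
    have huniv : {ω | X ω ∈ H} = Set.univ := by simp [hHtop]
    rw [huniv, measure_univ]
    simp [hδ]
  -- main case
  set q : ℕ := Fintype.card F with hq
  have hq2 : 2 ≤ q := Fintype.one_lt_card
  -- linear algebra setup
  set e : Module.Basis (Fin n) F (Fin n → F) := Pi.basisFun F (Fin n) with he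
  have hdot : ∀ x v : Fin n → F, e.toDual x v = x ⬝ᵥ v := by
    intro x v
    conv_lhs => rw [← e.sum_repr x]
    simp [he, ← Pi.basisFun_apply, Module.Basis.toDual_apply_right, dotProduct]
  set Wsub : Submodule F (Fin n → F) := H.dualAnnihilator.comap e.toDual with hWsub
  have hWmem : ∀ w, w ∈ Wsub ↔ ∀ v ∈ H, w ⬝ᵥ v = 0 := by
    intro w
    simp only [hWsub, Submodule.mem_comap, Submodule.mem_dualAnnihilator, hdot]
  have htde : ∀ φ : Module.Dual F (Fin n → F), e.toDual (e.toDualEquiv.symm φ) = φ := by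
    intro φ
    have := e.toDualEquiv.apply_symm_apply φ
    rwa [Module.Basis.toDualEquiv_apply] at this
  have hWrank : Module.finrank F Wsub = d := by
    have h1 : Wsub = H.dualAnnihilator.map (e.toDualEquiv.symm : _ →ₗ[F] _) := by
      rw [hWsub]
      exact Submodule.comap_equiv_eq_map_symm e.toDualEquiv H.dualAnnihilator
    have h2 : Module.finrank F Wsub = Module.finrank F H.dualAnnihilator := by
      rw [h1]; exact LinearEquiv.finrank_map_eq _ _
    have h3 := Subspace.finrank_add_finrank_dualCoannihilator_eq H.dualAnnihilator
    rw [Subspace.dualAnnihilator_dualCoannihilator_eq, hfinrank_pi, hH] at h3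
    omega
  have hHmem : ∀ x, x ∈ H ↔ ∀ w ∈ Wsub, x ⬝ᵥ w = 0 := by
    intro x
    constructor
    · intro hx w hw
      rw [dotProduct_comm]
      exact (hWmem w).1 hw x hx
    · intro hx
      rw [← Subspace.dualAnnihilator_dualCoannihilator_eq (W := H),
        Submodule.mem_dualCoannihilator]
      intro φ hφ
      have hw : e.toDualEquiv.symm φ ∈ Wsub := by
        rw [hWsub, Submodule.mem_comap, htde φ]
        exact hφ
      rw [← htde φ, hdot, dotProduct_comm]
      exact hx _ hw
  -- the finset of perp vectors
  set Wfin : Finset (Fin n → F) := Finset.univ.filter (· ∈ Wsub) with hWfin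
  have hWcard : Wfin.card = q ^ d := by
    rw [hWfin, ← Fintype.card_subtype,
      Module.card_eq_pow_finrank (K := F) (V := {x // x ∈ Wsub}), hWrank]
  -- counting
  have hcH : ∀ x, x ∈ H → (Wfin.filter (fun w => x ⬝ᵥ w = 0)).card = q ^ d := by
    intro x hx
    have heq : Wfin.filter (fun w => x ⬝ᵥ w = 0) = Wfin := by
      apply Finset.filter_true_of_mem
      intro w hw
      exact (hHmem x).1 hx w (by simpa [hWfin] using hw)
    rw [heq, hWcard]
  have hcNH : ∀ x, x ∉ H → (Wfin.filter (fun w => x ⬝ᵥ w = 0)).card = q ^ (d - 1) := by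
    intro x hx
    set ψ : Wsub →ₗ[F] F := (e.toDual x).domRestrict Wsub with hψ
    have hψapp : ∀ w : Wsub, ψ w = x ⬝ᵥ (w : Fin n → F) := by
      intro w; rw [hψ]; simp [hdot]
    have hψne : ψ ≠ 0 := by
      have hex : ∃ w ∈ Wsub, x ⬝ᵥ w ≠ 0 := by
        by_contra hcon
        push_neg at hcon
        exact hx ((hHmem x).2 hcon)
      obtain ⟨w, hw, hne⟩ := hex
      intro h0
      apply hne
      have h1 := hψapp ⟨w, hw⟩
      rw [h0] at h1
      simpa using h1.symm
    have hker : Module.finrank F (LinearMap.ker ψ) = d - 1 := by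
      have h1 := LinearMap.finrank_range_add_finrank_ker ψ
      rw [hWrank] at h1
      have hle : Module.finrank F (LinearMap.range ψ) ≤ 1 := by
        have := Submodule.finrank_le (LinearMap.range ψ)
        simpa using this
      have hne0 : Module.finrank F (LinearMap.range ψ) ≠ 0 := by
        intro h0
        rw [Submodule.finrank_eq_zero, LinearMap.range_eq_bot] at h0
        exact hψne h0
      omega
    have hcount : (Wfin.filter (fun w => x ⬝ᵥ w = 0)).card
        = Fintype.card {w : Fin n → F // w ∈ Wsub ∧ x ⬝ᵥ w = 0} := by
      rw [Fintype.card_subtype]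
      congr 1
      ext w
      simp [hWfin]
    have hequiv : {w : Fin n → F // w ∈ Wsub ∧ x ⬝ᵥ w = 0} ≃ LinearMap.ker ψ := by
      refine ⟨fun w => ⟨⟨w.1, w.2.1⟩, ?_⟩, fun w => ⟨w.1.1, w.1.2, ?_⟩,
        fun w => rfl, fun w => rfl⟩
      · rw [LinearMap.mem_ker, hψapp]; exact w.2.2
      · have h2 := w.2; rw [LinearMap.mem_ker, hψapp] at h2; exact h2
    rw [hcount, Fintype.card_congr hequiv,
      Module.card_eq_pow_finrank (K := F) (V := LinearMap.ker ψ), hker]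
  -- probability setup
  have hXmeas : Measurable X := measurable_pi_iff.mpr hmeas
  have hsing : ∀ x : Fin n → F, MeasurableSet (X ⁻¹' {x}) := by
    intro x
    have hiX : X ⁻¹' {x} = ⋂ i, (fun ω => X ω i) ⁻¹' {x i} := by
      ext ω; simp [funext_iff]
    rw [hiX]
    exact MeasurableSet.iInter fun i => (hmeas i) (measurableSet_singleton _)
  set p : (Fin n → F) → ℝ := fun x => (ℙ (X ⁻¹' {x})).toReal with hp
  have htool : ∀ s : Finset (Fin n → F), (ℙ (X ⁻¹' ↑s)).toReal = ∑ x ∈ s, p x := by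
    intro s
    rw [← MeasureTheory.sum_measure_preimage_singleton s (fun y _ => hsing y),
      ENNReal.toReal_sum (fun x _ => measure_ne_top _ _)]
  have hp0 : ∀ x, 0 ≤ p x := fun x => ENNReal.toReal_nonneg
  set PA : ℝ := (ℙ {ω | X ω ∈ H}).toReal with hPA
  set Hfin : Finset (Fin n → F) := Finset.univ.filter (· ∈ H) with hHfin
  have hPAsum : PA = ∑ x ∈ Hfin, p x := by
    have hset : {ω | X ω ∈ H} = X ⁻¹' ↑Hfin := by
      ext ω; simp [hHfin]
    rw [hPA, hset, htool]
  have hsum1 : ∑ x : Fin n → F, p x = 1 := by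
    have h1 := htool Finset.univ
    rw [Finset.coe_univ, Set.preimage_univ, measure_univ] at h1
    simpa using h1.symm
  have hBw : ∀ w : Fin n → F, (ℙ {ω | X ω ⬝ᵥ w = 0}).toReal
      = ∑ x ∈ Finset.univ.filter (fun x => x ⬝ᵥ w = 0), p x := by
    intro w
    have hset : {ω | X ω ⬝ᵥ w = 0} = X ⁻¹' ↑(Finset.univ.filter (fun x => x ⬝ᵥ w = 0)) := by
      ext ω; simp
    rw [hset, htool]
  -- double counting
  set S : ℝ := ∑ w ∈ Wfin, (ℙ {ω | X ω ⬝ᵥ w = 0}).toReal with hS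
  have hS1 : S = ∑ x : Fin n → F, p x * ((Wfin.filter (fun w => x ⬝ᵥ w = 0)).card : ℝ) := by
    rw [hS]
    have hstep : ∀ w ∈ Wfin, (ℙ {ω | X ω ⬝ᵥ w = 0}).toReal
        = ∑ x : Fin n → F, if x ⬝ᵥ w = 0 then p x else 0 := by
      intro w _; rw [hBw w, Finset.sum_filter]
    rw [Finset.sum_congr rfl hstep, Finset.sum_comm]
    refine Finset.sum_congr rfl fun x _ => ?_
    rw [← Finset.sum_filter, Finset.sum_const, nsmul_eq_mul, mul_comm]
  have hS2 : S = (q : ℝ) ^ d * PA + (q : ℝ) ^ (d - 1) * (1 - PA) := by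
    rw [hS1, ← Finset.sum_filter_add_sum_filter_not Finset.univ (· ∈ H)]
    have hA : ∑ x ∈ Finset.univ.filter (· ∈ H),
        p x * ((Wfin.filter (fun w => x ⬝ᵥ w = 0)).card : ℝ)
        = (q : ℝ) ^ d * PA := by
      rw [hPAsum, Finset.mul_sum, hHfin]
      refine Finset.sum_congr rfl fun x hx => ?_
      rw [hcH x (by simpa using hx)]
      push_cast
      ring
    have hB : ∑ x ∈ Finset.univ.filter (¬ · ∈ H),
        p x * ((Wfin.filter (fun w => x ⬝ᵥ w = 0)).card : ℝ)
        = (q : ℝ) ^ (d - 1) * (1 - PA) := by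
      have hcompl : ∑ x ∈ Finset.univ.filter (¬ · ∈ H), p x = 1 - PA := by
        have := Finset.sum_filter_add_sum_filter_not Finset.univ (· ∈ H) p
        rw [hsum1] at this
        rw [hPAsum, hHfin]
        linarith [this]
      rw [← hcompl, Finset.mul_sum]
      refine Finset.sum_congr rfl fun x hx => ?_
      rw [hcNH x (by simpa using hx)]
      push_cast
      ring
    rw [hA, hB]
  -- estimate on S
  have h0W : (0 : Fin n → F) ∈ Wfin := by
    simp only [hWfin, Finset.mem_filter, Finset.mem_univ, true_and]
    exact Wsub.zero_mem
  have hS3 : |S - (1 + ((q : ℝ) ^ d - 1) * (q : ℝ)⁻¹)| ≤ ((q : ℝ) ^ d - 1) * δ := by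
    rw [hS, ← Finset.add_sum_erase _ _ h0W]
    have h00 : (ℙ {ω | X ω ⬝ᵥ (0 : Fin n → F) = 0}).toReal = 1 := by
      have : {ω | X ω ⬝ᵥ (0 : Fin n → F) = 0} = Set.univ := by
        ext ω; simp
      rw [this, measure_univ]; simp
    rw [h00]
    have hcarderase : ((Wfin.erase 0).card : ℝ) = (q : ℝ) ^ d - 1 := by
      rw [Finset.card_erase_of_mem h0W, hWcard]
      have : 1 ≤ q ^ d := Nat.one_le_pow _ _ (by omega)
      push_cast [this]
      ring
    have hbound : |∑ w ∈ Wfin.erase 0, ((ℙ {ω | X ω ⬝ᵥ w = 0}).toReal - (q : ℝ)⁻¹)|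
        ≤ ((Wfin.erase 0).card : ℝ) * δ := by
      calc |∑ w ∈ Wfin.erase 0, ((ℙ {ω | X ω ⬝ᵥ w = 0}).toReal - (q : ℝ)⁻¹)|
          ≤ ∑ w ∈ Wfin.erase 0, |(ℙ {ω | X ω ⬝ᵥ w = 0}).toReal - (q : ℝ)⁻¹| :=
            Finset.abs_sum_le_sum_abs _ _
        _ ≤ ∑ w ∈ Wfin.erase 0, δ := by
            refine Finset.sum_le_sum fun w hw => ?_
            have hw0 : w ≠ 0 := Finset.ne_of_mem_erase hw
            have hwW : w ∈ Wsub := by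
              have := Finset.mem_of_mem_erase hw
              simpa [hWfin] using this
            exact le_of_lt (hperp w hw0 ((hWmem w).1 hwW))
        _ = ((Wfin.erase 0).card : ℝ) * δ := by rw [Finset.sum_const, nsmul_eq_mul]
    have hrw : 1 + ∑ w ∈ Wfin.erase 0, (ℙ {ω | X ω ⬝ᵥ w = 0}).toReal
        - (1 + ((q : ℝ) ^ d - 1) * (q : ℝ)⁻¹)
        = ∑ w ∈ Wfin.erase 0, ((ℙ {ω | X ω ⬝ᵥ w = 0}).toReal - (q : ℝ)⁻¹) := by
      rw [Finset.sum_sub_distrib, Finset.sum_const, nsmul_eq_mul, hcarderase]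
      ring
    rw [hrw]
    rw [hcarderase] at hbound
    exact hbound
  -- final algebra
  have hq2R : (2 : ℝ) ≤ (q : ℝ) := by exact_mod_cast hq2
  set A : ℝ := (q : ℝ) ^ (d - 1) with hA
  set B : ℝ := (q : ℝ) ^ d with hB
  have hpow : (q : ℝ) ^ d = (q : ℝ) ^ (d - 1) * (q : ℝ) := by
    rw [← pow_succ]
    congr 1
    omega
  have hBA : B = (q : ℝ) * A := by rw [hB, hA, hpow]; ring
  have hA1 : (1 : ℝ) ≤ A := one_le_pow₀ (by linarith)
  have hqpos : (0 : ℝ) < (q : ℝ) := by linarith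
  have hApos : (0 : ℝ) < A := by linarith
  have hBpos : (0 : ℝ) < B := by rw [hBA]; positivity
  have hABeq : B - A = ((q : ℝ) - 1) * A := by rw [hBA]; ring
  have hABpos : 0 < B - A := by
    rw [hABeq]
    exact mul_pos (by linarith) hApos
  have hqne : (q : ℝ) ≠ 0 := ne_of_gt hqpos
  have hBne : B ≠ 0 := ne_of_gt hBpos
  have haux1 : B * B⁻¹ = 1 := mul_inv_cancel₀ hBne
  have haux2 : A * B⁻¹ = (q : ℝ)⁻¹ := by
    rw [hBA]
    field_simp
  have haux3 : B * (q : ℝ)⁻¹ = A := by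
    rw [hBA]
    field_simp
  have hfact : S - (1 + (B - 1) * (q : ℝ)⁻¹) = (B - A) * (PA - B⁻¹) := by
    rw [hS2]
    linear_combination -haux3 + haux1 - haux2
  rw [hfact] at hS3
  rw [abs_mul, abs_of_pos hABpos] at hS3
  have hq2A : 0 ≤ ((q : ℝ) - 2) * A :=
    mul_nonneg (by linarith) (le_of_lt hApos)
  have h2AB : 2 * A - B ≤ 0 := by
    rw [hBA]
    linarith [hq2A]
  have hineq : B - 1 ≤ 2 * (B - A) := by linarith
  have h2 : (B - 1) * δ ≤ 2 * (B - A) * δ :=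
    mul_le_mul_of_nonneg_right hineq hδ
  have h3 : (B - A) * |PA - B⁻¹| ≤ (B - A) * (2 * δ) := by linarith
  exact (mul_le_mul_iff_right₀ hABpos).mp h3
end
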